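/- Let α, β ∈ (0,1], let γ, δ, η, ζ ≥ 0 with d := ηδ + γζ + γη/α > 0, let G be the associated general Green's function, and let h : [0,1] → ℝ be continuous. Define x(t) = ∫₀¹ G(t,s) h(s) s^{β−1} ds. Then for every t ∈ (0,1), the function y(t) := t^{1−α} x′(t) is well defined (x is differentiable at t), y is differentiable at t, and −t^{1−β} y′(t) = h(t). -/

import Mathlib

open MeasureTheory Set Filter intervalIntegral

/-- With `α, β ∈ (0,1]`, parameters `γ, δ, η, ζ ≥ 0`, `d = ηδ + γζ + γη/α > 0`,
`G` the general Green's function, `h` continuous on `[0,1]`, and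
`x(t) = ∫₀¹ G(t,s) h(s) s^{β−1} ds`, for every `t ∈ (0,1)` the function `x` is differentiable
at `t`, `y(u) := u^{1−α} x′(u)` is differentiable at `t`, and `−t^{1−β} y′(t) = h(t)`. -/
theorem greens_function_solves_ode
    (α β : ℝ) (hα : α ∈ Set.Ioc (0:ℝ) 1) (hβ : β ∈ Set.Ioc (0:ℝ) 1)
    (γ δ η ζ : ℝ) (hγ : 0 ≤ γ) (hδ : 0 ≤ δ) (hη : 0 ≤ η) (hζ : 0 ≤ ζ)
    (d : ℝ) (hd : d = η * δ + γ * ζ + γ * η / α) (hdpos : 0 < d)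
    (G : ℝ → ℝ → ℝ)
    (hG : ∀ t s : ℝ, G t s = if s ≤ t
        then (1 / d) * (δ + (γ / α) * s ^ α) * (ζ + (η / α) * (1 - t ^ α))
        else (1 / d) * (δ + (γ / α) * t ^ α) * (ζ + (η / α) * (1 - s ^ α)))
    (h : ℝ → ℝ) (hh : ContinuousOn h (Set.Icc 0 1))
    (x : ℝ → ℝ) (hx : ∀ t : ℝ, x t = ∫ s in (0:ℝ)..1, G t s * h s * s ^ (β - 1)) :
    ∀ t ∈ Set.Ioo (0:ℝ) 1,
      DifferentiableAt ℝ x t ∧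
      DifferentiableAt ℝ (fun u : ℝ => u ^ (1 - α) * deriv x u) t ∧
      -(t ^ (1 - β)) * deriv (fun u : ℝ => u ^ (1 - α) * deriv x u) t = h t := by
  obtain ⟨hα0, hα1⟩ := hα
  obtain ⟨hβ0, hβ1⟩ := hβ
  have hαne : α ≠ 0 := ne_of_gt hα0
  have hdne : d ≠ 0 := ne_of_gt hdpos
  intro t ht
  -- basic continuity facts
  have hrpα : Continuous (fun s : ℝ => s ^ α) := Real.continuous_rpow_const hα0.le
  have hIβ : ∀ a b : ℝ, IntervalIntegrable (fun s : ℝ => s ^ (β - 1)) volume a b :=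
    fun a b => intervalIntegral.intervalIntegrable_rpow' (by linarith)
  -- the two pieces of the Green's function integrand
  set f1 : ℝ → ℝ := fun s => (δ + γ / α * s ^ α) * h s * s ^ (β - 1) with hf1def
  set f2 : ℝ → ℝ := fun s => (ζ + η / α * (1 - s ^ α)) * h s * s ^ (β - 1) with hf2def
  have hf1int : ∀ a b : ℝ, uIcc a b ⊆ Icc 0 1 → IntervalIntegrable f1 volume a b := by
    intro a b hsub
    have hc : ContinuousOn (fun s : ℝ => (δ + γ / α * s ^ α) * h s) (uIcc a b) :=
      ((continuous_const.add (continuous_const.mul hrpα)).continuousOn).mul (hh.mono hsub)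
    exact (hIβ a b).continuousOn_mul hc
  have hf2int : ∀ a b : ℝ, uIcc a b ⊆ Icc 0 1 → IntervalIntegrable f2 volume a b := by
    intro a b hsub
    have hc : ContinuousOn (fun s : ℝ => (ζ + η / α * (1 - s ^ α)) * h s) (uIcc a b) :=
      ((continuous_const.add (continuous_const.mul
        (continuous_const.sub hrpα))).continuousOn).mul (hh.mono hsub)
    exact (hIβ a b).continuousOn_mul hc
  have hcfaux : ∀ u ∈ Ioo (0:ℝ) 1, ContinuousAt f1 u ∧ ContinuousAt f2 u := by
    intro u hu
    have hhu : ContinuousAt h u := hh.continuousAt (Icc_mem_nhds hu.1 hu.2)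
    have hru : ContinuousAt (fun s : ℝ => s ^ (β - 1)) u :=
      Real.continuousAt_rpow_const u (β - 1) (Or.inl hu.1.ne')
    constructor
    · exact ((continuousAt_const.add (continuousAt_const.mul hrpα.continuousAt)).mul hhu).mul hru
    · exact ((continuousAt_const.add (continuousAt_const.mul
        (continuousAt_const.sub hrpα.continuousAt))).mul hhu).mul hru
  have hcf1 : ContinuousOn f1 (Ioo (0:ℝ) 1) :=
    fun u hu => ((hcfaux u hu).1).continuousWithinAt
  have hcf2 : ContinuousOn f2 (Ioo (0:ℝ) 1) :=
    fun u hu => ((hcfaux u hu).2).continuousWithinAt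
  -- antiderivative pieces
  set P : ℝ → ℝ := fun u => ∫ s in (0:ℝ)..u, f1 s with hPdef
  set R : ℝ → ℝ := fun u => ∫ s in (1:ℝ)..u, f2 s with hRdef
  have hP' : ∀ u ∈ Ioo (0:ℝ) 1, HasDerivAt P (f1 u) u := by
    intro u hu
    refine intervalIntegral.integral_hasDerivAt_right
      (hf1int 0 u ?_) (hcf1.stronglyMeasurableAtFilter isOpen_Ioo u hu) (hcfaux u hu).1
    rw [uIcc_of_le hu.1.le]
    exact Icc_subset_Icc le_rfl hu.2.le
  have hR' : ∀ u ∈ Ioo (0:ℝ) 1, HasDerivAt R (f2 u) u := by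
    intro u hu
    refine intervalIntegral.integral_hasDerivAt_right
      (hf2int 1 u ?_) (hcf2.stronglyMeasurableAtFilter isOpen_Ioo u hu) (hcfaux u hu).2
    rw [uIcc_of_ge hu.2.le]
    exact Icc_subset_Icc hu.1.le le_rfl
  -- coefficient functions
  set A : ℝ → ℝ := fun u => (1 / d) * (ζ + η / α * (1 - u ^ α)) with hAdef
  set B : ℝ → ℝ := fun u => (1 / d) * (δ + γ / α * u ^ α) with hBdef
  have hA' : ∀ u : ℝ, u ≠ 0 → HasDerivAt A (-(η / d) * u ^ (α - 1)) u := by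
    intro u hu
    have h1 : HasDerivAt (fun v : ℝ => v ^ α) (α * u ^ (α - 1)) u :=
      Real.hasDerivAt_rpow_const (Or.inl hu)
    have h2 := HasDerivAt.const_mul (1 / d)
      (HasDerivAt.const_add ζ (HasDerivAt.const_mul (η / α) (HasDerivAt.const_sub 1 h1)))
    refine h2.congr_deriv ?_
    field_simp
  have hB' : ∀ u : ℝ, u ≠ 0 → HasDerivAt B ((γ / d) * u ^ (α - 1)) u := by
    intro u hu
    have h1 : HasDerivAt (fun v : ℝ => v ^ α) (α * u ^ (α - 1)) u :=
      Real.hasDerivAt_rpow_const (Or.inl hu)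
    have h2 := HasDerivAt.const_mul (1 / d)
      (HasDerivAt.const_add δ (HasDerivAt.const_mul (γ / α) h1))
    refine h2.congr_deriv ?_
    field_simp
  -- splitting the integral
  have hsplit : ∀ u ∈ Ioo (0:ℝ) 1, x u = A u * P u + B u * (-(R u)) := by
    intro u hu
    have hsub1 : uIcc (0:ℝ) u ⊆ Icc 0 1 := by
      rw [uIcc_of_le hu.1.le]; exact Icc_subset_Icc le_rfl hu.2.le
    have hsub2 : uIcc u (1:ℝ) ⊆ Icc 0 1 := by
      rw [uIcc_of_le hu.2.le]; exact Icc_subset_Icc hu.1.le le_rfl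
    have hF1 : EqOn (fun s => G u s * h s * s ^ (β - 1)) (fun s => A u * f1 s) (uIcc (0:ℝ) u) := by
      intro s hs
      rw [uIcc_of_le hu.1.le] at hs
      simp only [hG u s, if_pos hs.2, hAdef, hf1def]
      ring
    have hF2 : EqOn (fun s => G u s * h s * s ^ (β - 1)) (fun s => B u * f2 s) (uIcc u (1:ℝ)) := by
      intro s hs
      rw [uIcc_of_le hu.2.le] at hs
      by_cases hsu : s ≤ u
      · have hsu' : s = u := le_antisymm hsu hs.1
        subst hsu'
        have hGs : G s s = 1 / d * (δ + γ / α * s ^ α) * (ζ + η / α * (1 - s ^ α)) := by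
          rw [hG s s, if_pos le_rfl]
        simp only [hGs, hBdef, hf2def]
        ring
      · simp only [hG u s, if_neg hsu, hBdef, hf2def]
        ring
    have hFi1 : IntervalIntegrable (fun s => G u s * h s * s ^ (β - 1)) volume 0 u := by
      rw [intervalIntegrable_iff]
      have h0 : IntervalIntegrable (fun s => A u * f1 s) volume 0 u :=
        (hf1int 0 u hsub1).const_mul _
      rw [intervalIntegrable_iff] at h0
      exact h0.congr_fun (fun s hs => (hF1 (uIoc_subset_uIcc hs)).symm) measurableSet_uIoc
    have hFi2 : IntervalIntegrable (fun s => G u s * h s * s ^ (β - 1)) volume u 1 := by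
      rw [intervalIntegrable_iff]
      have h0 : IntervalIntegrable (fun s => B u * f2 s) volume u 1 :=
        (hf2int u 1 hsub2).const_mul _
      rw [intervalIntegrable_iff] at h0
      exact h0.congr_fun (fun s hs => (hF2 (uIoc_subset_uIcc hs)).symm) measurableSet_uIoc
    rw [hx u, ← intervalIntegral.integral_add_adjacent_intervals hFi1 hFi2,
      intervalIntegral.integral_congr hF1, intervalIntegral.integral_congr hF2,
      intervalIntegral.integral_const_mul, intervalIntegral.integral_const_mul,
      intervalIntegral.integral_symm 1 u]
  -- the function w
  set w : ℝ → ℝ := fun u => (-(η / d)) * P u + (-(γ / d)) * R u with hwdef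
  have hw' : ∀ u ∈ Ioo (0:ℝ) 1,
      HasDerivAt w ((-(η / d)) * f1 u + (-(γ / d)) * f2 u) u := fun u hu =>
    (HasDerivAt.const_mul _ (hP' u hu)).add (HasDerivAt.const_mul _ (hR' u hu))
  -- derivative of x
  have key : ∀ u ∈ Ioo (0:ℝ) 1, HasDerivAt x (u ^ (α - 1) * w u) u := by
    intro u hu
    have hrhs : HasDerivAt (fun v => A v * P v + B v * (-(R v)))
        ((-(η / d) * u ^ (α - 1)) * P u + A u * f1 u +
          (((γ / d) * u ^ (α - 1)) * (-(R u)) + B u * (-(f2 u)))) u :=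
      ((hA' u hu.1.ne').mul (hP' u hu)).add ((hB' u hu.1.ne').mul ((hR' u hu).neg))
    have hxe : x =ᶠ[nhds u] fun v => A v * P v + B v * (-(R v)) :=
      eventuallyEq_of_mem (isOpen_Ioo.mem_nhds hu) (fun v hv => hsplit v hv)
    have hfinal := hrhs.congr_of_eventuallyEq hxe
    refine hfinal.congr_deriv ?_
    simp only [hAdef, hBdef, hf1def, hf2def, hwdef]
    ring
  have hds : ∀ u ∈ Ioo (0:ℝ) 1, deriv x u = u ^ (α - 1) * w u :=
    fun u hu => (key u hu).deriv
  -- the function y coincides with w on (0,1)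
  have hyw : EqOn (fun u : ℝ => u ^ (1 - α) * deriv x u) w (Ioo (0:ℝ) 1) := by
    intro u hu
    have hexp : (1 - α) + (α - 1) = 0 := by ring
    show u ^ (1 - α) * deriv x u = w u
    rw [hds u hu, ← mul_assoc, ← Real.rpow_add hu.1, hexp, Real.rpow_zero, one_mul]
  have hyD : HasDerivAt (fun u : ℝ => u ^ (1 - α) * deriv x u)
      ((-(η / d)) * f1 t + (-(γ / d)) * f2 t) t :=
    (hw' t ht).congr_of_eventuallyEq (eventuallyEq_of_mem (isOpen_Ioo.mem_nhds ht) hyw)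
  refine ⟨(key t ht).differentiableAt, hyD.differentiableAt, ?_⟩
  rw [hyD.deriv]
  have hE : (-(η / d)) * f1 t + (-(γ / d)) * f2 t = -(h t * t ^ (β - 1)) := by
    have h1 : η * (δ + γ / α * t ^ α) + γ * (ζ + η / α * (1 - t ^ α)) = d := by rw [hd]; ring
    simp only [hf1def, hf2def]
    calc (-(η / d)) * ((δ + γ / α * t ^ α) * h t * t ^ (β - 1)) +
        (-(γ / d)) * ((ζ + η / α * (1 - t ^ α)) * h t * t ^ (β - 1))
        = -(h t * t ^ (β - 1) *
            ((η * (δ + γ / α * t ^ α) + γ * (ζ + η / α * (1 - t ^ α))) / d)) := by ring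
      _ = -(h t * t ^ (β - 1) * (d / d)) := by rw [h1]
      _ = -(h t * t ^ (β - 1)) := by rw [div_self hdne, mul_one]
  have ht2 : t ^ (1 - β) * t ^ (β - 1) = 1 := by
    rw [← Real.rpow_add ht.1]
    norm_num
  rw [hE, neg_mul_neg, mul_comm (h t), ← mul_assoc, ht2, one_mul]
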